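/- Assume the data is of Heisenberg type. Let 1 < p < ∞ with p ≠ Q, and define u(g) = N(g)^{(p−Q)/(p−1)} for g ≠ e. Then for every g ∈ G with g ≠ e one has |Xu(g)|² 𝓛u(g) + (p−2) 𝓛_∞u(g) = 0; in particular, for p ≥ 2 the function u is p-harmonic on G ∖ {e}. -/

import Mathlib

open scoped RealInnerProductSpace
open MeasureTheory

noncomputable section

variable {V₁ V₂ : Type*} [NormedAddCommGroup V₁] [InnerProductSpace ℝ V₁]
  [NormedAddCommGroup V₂] [InnerProductSpace ℝ V₂]

/-- The horizontal derivative of `f : V₁ × V₂ → ℝ` at `g = (z,t)` in the horizontal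
direction `v ∈ V₁`, namely `Df(g)(v, ½[z,v])`. -/
def Xd (b : V₁ →ₗ[ℝ] V₁ →ₗ[ℝ] V₂) (v : V₁) (f : V₁ × V₂ → ℝ) (g : V₁ × V₂) : ℝ :=
  fderiv ℝ f g (v, (2⁻¹ : ℝ) • b g.1 v)

/-- The horizontal gradient: the unique vector of `V₁` representing the linear functional
`v ↦ X_v f (g)` via the inner product of `V₁`. -/
def Xgrad [FiniteDimensional ℝ V₁] [FiniteDimensional ℝ V₂]
    (b : V₁ →ₗ[ℝ] V₁ →ₗ[ℝ] V₂) (f : V₁ × V₂ → ℝ) (g : V₁ × V₂) : V₁ :=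
  (InnerProductSpace.toDual ℝ V₁).symm
    (LinearMap.toContinuousLinearMap
      ((fderiv ℝ f g).toLinearMap.comp
        (LinearMap.prod LinearMap.id ((2⁻¹ : ℝ) • b g.1))))

/-- The symmetrized second horizontal derivative `f_{,uv} = ½(X_u X_v f + X_v X_u f)`. -/
def X2sym (b : V₁ →ₗ[ℝ] V₁ →ₗ[ℝ] V₂) (u v : V₁) (f : V₁ × V₂ → ℝ) (g : V₁ × V₂) : ℝ :=
  (Xd b u (Xd b v f) g + Xd b v (Xd b u f) g) / 2

/-- The horizontal (sub-)Laplacian `𝓛 f = Σᵢ X_{eᵢ} X_{eᵢ} f`. -/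
def hLap [FiniteDimensional ℝ V₁] (b : V₁ →ₗ[ℝ] V₁ →ₗ[ℝ] V₂) (f : V₁ × V₂ → ℝ)
    (g : V₁ × V₂) : ℝ :=
  ∑ i, Xd b (stdOrthonormalBasis ℝ V₁ i) (Xd b (stdOrthonormalBasis ℝ V₁ i) f) g

/-- The horizontal ∞-Laplacian `𝓛_∞ f = Σ_{i,j} f_{,eᵢeⱼ} X_{eᵢ}f X_{eⱼ}f`. -/
def hInfLap [FiniteDimensional ℝ V₁] (b : V₁ →ₗ[ℝ] V₁ →ₗ[ℝ] V₂) (f : V₁ × V₂ → ℝ)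
    (g : V₁ × V₂) : ℝ :=
  ∑ i, ∑ j, X2sym b (stdOrthonormalBasis ℝ V₁ i) (stdOrthonormalBasis ℝ V₁ j) f g *
    Xd b (stdOrthonormalBasis ℝ V₁ i) f g * Xd b (stdOrthonormalBasis ℝ V₁ j) f g

/-- `ψ(z,t) = |z|²`. -/
def psiF (g : V₁ × V₂) : ℝ := ‖g.1‖ ^ 2

/-- `χ(z,t) = |t|²`. -/
def chiF (g : V₁ × V₂) : ℝ := ‖g.2‖ ^ 2

/-- `a(z,t) = ψ² + 16χ = |z|⁴ + 16|t|²`. -/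
def aF (g : V₁ × V₂) : ℝ := psiF g ^ 2 + 16 * chiF g

/-- The Folland–Kaplan gauge `N = a^{1/4}`. -/
def Ng (g : V₁ × V₂) : ℝ := aF g ^ ((1 : ℝ) / 4)

/-- `A(z,t) = |z|² z + 4 J(t) z`. -/
def Ag (J : V₂ → V₁ →ₗ[ℝ] V₁) (g : V₁ × V₂) : V₁ :=
  ‖g.1‖ ^ 2 • g.1 + (4 : ℝ) • J g.2 g.1

/-- The group law `(z,t)·(z',t') = (z+z', t+t'+½[z,z'])`. -/
def gmul (b : V₁ →ₗ[ℝ] V₁ →ₗ[ℝ] V₂) (g h : V₁ × V₂) : V₁ × V₂ :=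
  (g.1 + h.1, g.2 + h.2 + (2⁻¹ : ℝ) • b g.1 h.1)

/-- The group inverse `(z,t)⁻¹ = (−z,−t)`. -/
def ginv (g : V₁ × V₂) : V₁ × V₂ := (-g.1, -g.2)

end

/-! ### Auxiliary material for the proof -/

set_option linter.unusedSectionVars false

noncomputable section AuxBilin

variable {E F G H : Type*} [NormedAddCommGroup E] [NormedSpace ℝ E] [FiniteDimensional ℝ E]
  [NormedAddCommGroup F] [NormedSpace ℝ F] [FiniteDimensional ℝ F]
  [NormedAddCommGroup G] [NormedSpace ℝ G]
  [NormedAddCommGroup H] [NormedSpace ℝ H]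

/-- A bilinear map on finite-dimensional spaces as a continuous bilinear map. -/
def clm2 (L : E →ₗ[ℝ] F →ₗ[ℝ] G) : E →L[ℝ] F →L[ℝ] G :=
  LinearMap.toContinuousLinearMap
  { toFun := fun x => LinearMap.toContinuousLinearMap (L x)
    map_add' := by intro x y; ext v; simp
    map_smul' := by intro c x; ext v; simp }

@[simp] lemma clm2_apply (L : E →ₗ[ℝ] F →ₗ[ℝ] G) (x : E) (y : F) : clm2 L x y = L x y := rfl

lemma HasFDerivAt.bilin (L : E →ₗ[ℝ] F →ₗ[ℝ] G) {f : H → E} {g : H → F}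
    {f' : H →L[ℝ] E} {g' : H →L[ℝ] F} {x : H}
    (hf : HasFDerivAt f f' x) (hg : HasFDerivAt g g' x) :
    HasFDerivAt (fun y => L (f y) (g y))
      (((clm2 L (f x)).comp g') + (((clm2 L).flip (g x)).comp f')) x := by
  have h := (clm2 L).hasFDerivAt_of_bilinear hf hg
  convert h using 1
  · rfl
  · ext v; rfl

end AuxBilin

noncomputable section AuxMain

variable {V₁ V₂ : Type*} [NormedAddCommGroup V₁] [InnerProductSpace ℝ V₁]
  [FiniteDimensional ℝ V₁]
  [NormedAddCommGroup V₂] [InnerProductSpace ℝ V₂] [FiniteDimensional ℝ V₂]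

lemma aF_nonneg (g : V₁ × V₂) : 0 ≤ aF g := by
  unfold aF chiF; positivity

lemma aF_zero : aF (0 : V₁ × V₂) = 0 := by
  simp [aF, psiF, chiF]

lemma aF_pos {g : V₁ × V₂} (hg : g ≠ 0) : 0 < aF g := by
  rcases eq_or_ne g.1 0 with h1 | h1
  · have h2 : g.2 ≠ 0 := fun h2 => hg (Prod.ext h1 h2)
    have h3 : 0 < ‖g.2‖ := norm_pos_iff.2 h2
    have h0 : 0 ≤ psiF g ^ 2 := sq_nonneg _
    have h4 : 0 < chiF g := by unfold chiF; positivity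
    unfold aF; nlinarith
  · have h3 : 0 < ‖g.1‖ := norm_pos_iff.2 h1
    have h4 : 0 < psiF g := by unfold psiF; positivity
    have h5 : 0 ≤ chiF g := by unfold chiF; positivity
    unfold aF; nlinarith

lemma continuous_aF : Continuous (aF : V₁ × V₂ → ℝ) := by
  unfold aF psiF chiF; fun_prop

lemma hasFDerivAt_aF (g : V₁ × V₂) :
    ∃ D : (V₁ × V₂) →L[ℝ] ℝ, HasFDerivAt aF D g ∧
      ∀ w s, D (w, s) = 4 * ‖g.1‖ ^ 2 * ⟪g.1, w⟫ + 32 * ⟪g.2, s⟫ := by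
  have h1 : HasFDerivAt (fun g : V₁ × V₂ => ‖g.1‖ ^ 2)
      (2 • (innerSL ℝ g.1).comp (ContinuousLinearMap.fst ℝ V₁ V₂)) g :=
    (hasFDerivAt_fst (p := g)).norm_sq
  have h2 : HasFDerivAt (fun g : V₁ × V₂ => ‖g.2‖ ^ 2)
      (2 • (innerSL ℝ g.2).comp (ContinuousLinearMap.snd ℝ V₁ V₂)) g :=
    (hasFDerivAt_snd (p := g)).norm_sq
  have h3 := (h1.mul h1).add (h2.const_mul (16 : ℝ))
  have h4 : (aF : V₁ × V₂ → ℝ) = fun x => ‖x.1‖ ^ 2 * ‖x.1‖ ^ 2 + 16 * ‖x.2‖ ^ 2 := by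
    funext x; simp [aF, psiF, chiF]; ring
  refine ⟨_, h3.congr_of_eventuallyEq (Filter.Eventually.of_forall fun x => by rw [h4]; rfl), ?_⟩
  intro w s
  simp [ContinuousLinearMap.smul_apply]
  ring

lemma hasFDerivAt_rpow_aF (β : ℝ) (g : V₁ × V₂) (hg : aF g ≠ 0) :
    ∃ D : (V₁ × V₂) →L[ℝ] ℝ, HasFDerivAt (fun h : V₁ × V₂ => aF h ^ β) D g ∧
      ∀ w s, D (w, s) = β * aF g ^ (β - 1) *
        (4 * ‖g.1‖ ^ 2 * ⟪g.1, w⟫ + 32 * ⟪g.2, s⟫) := by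
  obtain ⟨D, hD, hDe⟩ := hasFDerivAt_aF g
  refine ⟨_, hD.rpow_const (Or.inl hg), ?_⟩
  intro w s
  simp [hDe w s]
  try ring

/-- `A` as a function of `g`, with a linear `J`. -/
def AJ (Jl : V₂ →ₗ[ℝ] V₁ →ₗ[ℝ] V₁) (g : V₁ × V₂) : V₁ :=
  ‖g.1‖ ^ 2 • g.1 + (4 : ℝ) • Jl g.2 g.1

lemma hasFDerivAt_E (Jl : V₂ →ₗ[ℝ] V₁ →ₗ[ℝ] V₁) (c γ : ℝ) (v : V₁)
    (g : V₁ × V₂) (hg : aF g ≠ 0) :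
    ∃ D : (V₁ × V₂) →L[ℝ] ℝ,
      HasFDerivAt (fun h : V₁ × V₂ => c * aF h ^ γ * ⟪AJ Jl h, v⟫) D g ∧
      ∀ w s, D (w, s) =
        c * (γ * aF g ^ (γ - 1) * (4 * ‖g.1‖ ^ 2 * ⟪g.1, w⟫ + 32 * ⟪g.2, s⟫)) * ⟪AJ Jl g, v⟫
        + c * aF g ^ γ *
          (2 * ⟪g.1, w⟫ * ⟪g.1, v⟫ + ‖g.1‖ ^ 2 * ⟪w, v⟫ + 4 * ⟪Jl s g.1 + Jl g.2 w, v⟫) := by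
  obtain ⟨D, hD, hDe⟩ := hasFDerivAt_aF g
  have hc : HasFDerivAt (fun h : V₁ × V₂ => c * aF h ^ γ) _ g :=
    (hD.rpow_const (Or.inl hg)).const_mul c
  have h1 : HasFDerivAt (fun h : V₁ × V₂ => ‖h.1‖ ^ 2)
      (2 • (innerSL ℝ g.1).comp (ContinuousLinearMap.fst ℝ V₁ V₂)) g :=
    (hasFDerivAt_fst (p := g)).norm_sq
  have h2 : HasFDerivAt (fun h : V₁ × V₂ => ‖h.1‖ ^ 2 • h.1) _ g :=
    h1.smul (hasFDerivAt_fst (p := g))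
  have h3 : HasFDerivAt (fun h : V₁ × V₂ => Jl h.2 h.1) _ g :=
    HasFDerivAt.bilin Jl (hasFDerivAt_snd (p := g)) (hasFDerivAt_fst (p := g))
  have hA : HasFDerivAt (fun h : V₁ × V₂ => AJ Jl h) _ g :=
    h2.add (h3.const_smul (4 : ℝ))
  have hI : HasFDerivAt (fun h : V₁ × V₂ => ⟪AJ Jl h, v⟫) _ g :=
    hA.inner ℝ (hasFDerivAt_const v g)
  refine ⟨_, hc.mul hI, ?_⟩
  intro w s
  simp [hDe w s, AJ, fderivInnerCLM_apply, inner_add_left, inner_smul_left,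
    ContinuousLinearMap.smul_apply, real_inner_comm]
  try ring

section JFormulas

variable (b : V₁ →ₗ[ℝ] V₁ →ₗ[ℝ] V₂) (Jl : V₂ →ₗ[ℝ] V₁ →ₗ[ℝ] V₁)

lemma XdU_eq (hJb : ∀ (t : V₂) (z z' : V₁), ⟪Jl t z, z'⟫ = ⟪b z z', t⟫) (β : ℝ)
    {g : V₁ × V₂} (hg : aF g ≠ 0) (v : V₁) :
    Xd b v (fun h => aF h ^ β) g = 4 * β * aF g ^ (β - 1) * ⟪AJ Jl g, v⟫ := by
  obtain ⟨D, hD, hDe⟩ := hasFDerivAt_rpow_aF β g hg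
  show fderiv ℝ (fun h => aF h ^ β) g (v, (2⁻¹ : ℝ) • b g.1 v) = _
  rw [hD.fderiv, hDe]
  have h1 : ⟪g.2, (2⁻¹ : ℝ) • b g.1 v⟫ = 2⁻¹ * ⟪Jl g.2 g.1, v⟫ := by
    rw [real_inner_smul_right, real_inner_comm, hJb]
  have h2 : ⟪AJ Jl g, v⟫ = ‖g.1‖ ^ 2 * ⟪g.1, v⟫ + 4 * ⟪Jl g.2 g.1, v⟫ := by
    simp [AJ, inner_add_left, real_inner_smul_left]
  rw [h1, h2]
  ring

lemma Xd2_eq (hJb : ∀ (t : V₂) (z z' : V₁), ⟪Jl t z, z'⟫ = ⟪b z z', t⟫) (β : ℝ)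
    {g : V₁ × V₂} (hg : aF g ≠ 0) (v w : V₁) :
    Xd b w (fun h => 4 * β * aF h ^ (β - 1) * ⟪AJ Jl h, v⟫) g
      = 16 * β * (β - 1) * aF g ^ (β - 2) * ⟪AJ Jl g, w⟫ * ⟪AJ Jl g, v⟫
        + 4 * β * aF g ^ (β - 1) *
          (2 * ⟪g.1, w⟫ * ⟪g.1, v⟫ + ‖g.1‖ ^ 2 * ⟪w, v⟫ + 2 * ⟪b g.1 v, b g.1 w⟫
            + 4 * ⟪Jl g.2 w, v⟫) := by
  obtain ⟨D, hD, hDe⟩ := hasFDerivAt_E Jl (4 * β) (β - 1) v g hg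
  show fderiv ℝ (fun h => 4 * β * aF h ^ (β - 1) * ⟪AJ Jl h, v⟫) g
      (w, (2⁻¹ : ℝ) • b g.1 w) = _
  rw [hD.fderiv, hDe]
  have h1 : ⟪g.2, (2⁻¹ : ℝ) • b g.1 w⟫ = 2⁻¹ * ⟪Jl g.2 g.1, w⟫ := by
    rw [real_inner_smul_right, real_inner_comm, hJb]
  have h2 : ⟪AJ Jl g, w⟫ = ‖g.1‖ ^ 2 * ⟪g.1, w⟫ + 4 * ⟪Jl g.2 g.1, w⟫ := by
    simp [AJ, inner_add_left, real_inner_smul_left]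
  have h3 : Jl ((2⁻¹ : ℝ) • b g.1 w) g.1 = (2⁻¹ : ℝ) • Jl (b g.1 w) g.1 := by
    rw [_root_.map_smul]; rfl
  have h4 : ⟪Jl (b g.1 w) g.1, v⟫ = ⟪b g.1 v, b g.1 w⟫ := hJb _ _ _
  rw [h1, h3, inner_add_left, real_inner_smul_left, h4, h2]
  have : (β - 1 - 1) = β - 2 := by ring
  rw [this]
  ring

end JFormulas

lemma sum_inner_mul {ι : Type*} [Fintype ι] (e : OrthonormalBasis ι ℝ V₁) (x y : V₁) :
    ∑ i, ⟪x, e i⟫ * ⟪y, e i⟫ = ⟪x, y⟫ := by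
  rw [← e.sum_inner_mul_inner x y]
  exact Finset.sum_congr rfl fun i _ => by rw [real_inner_comm (e i) y]

end AuxMain

theorem riesz_htype_singular_p_harmonic {V₁ V₂ : Type*} [NormedAddCommGroup V₁] [InnerProductSpace ℝ V₁]
    [FiniteDimensional ℝ V₁] [NormedAddCommGroup V₂] [InnerProductSpace ℝ V₂]
    [FiniteDimensional ℝ V₂] (m k : ℕ) (hm : 1 ≤ m) (hk : 1 ≤ k)
    (hdV₁ : Module.finrank ℝ V₁ = m) (hdV₂ : Module.finrank ℝ V₂ = k)
    (b : V₁ →ₗ[ℝ] V₁ →ₗ[ℝ] V₂) (hskew : ∀ z z' : V₁, b z z' = - b z' z)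
    (J : V₂ → V₁ →ₗ[ℝ] V₁) (hJ : ∀ (t : V₂) (z z' : V₁), ⟪J t z, z'⟫ = ⟪b z z', t⟫) (hH : ∀ (t : V₂) (z : V₁), ‖J t z‖ = ‖t‖ * ‖z‖)
    (p : ℝ) (hp1 : 1 < p) (hpQ : p ≠ (m : ℝ) + 2 * k)
    (u : V₁ × V₂ → ℝ)
    (hu : ∀ g : V₁ × V₂, g ≠ (0, 0) → u g = Ng g ^ ((p - ((m : ℝ) + 2 * k)) / (p - 1))) :
    ∀ g : V₁ × V₂, g ≠ (0, 0) →
      ‖Xgrad b u g‖ ^ 2 * hLap b u g + (p - 2) * hInfLap b u g = 0 := by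
  intro g hg
  have hpne : p - 1 ≠ 0 := sub_ne_zero.2 (ne_of_gt hp1)
  set β : ℝ := (p - ((m : ℝ) + 2 * k)) / (p - 1) / 4 with hβ
  -- J is linear in t
  have hJadd : ∀ t t' : V₂, J (t + t') = J t + J t' := by
    intro t t'
    apply LinearMap.ext; intro z
    apply ext_inner_right ℝ; intro v
    rw [LinearMap.add_apply, inner_add_left, hJ, hJ, hJ, inner_add_right]
  have hJsmul : ∀ (c : ℝ) (t : V₂), J (c • t) = c • J t := by
    intro c t
    apply LinearMap.ext; intro z
    apply ext_inner_right ℝ; intro v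
    rw [LinearMap.smul_apply, real_inner_smul_left, hJ, hJ, real_inner_smul_right]
  let Jl : V₂ →ₗ[ℝ] V₁ →ₗ[ℝ] V₁ :=
    { toFun := J, map_add' := hJadd, map_smul' := hJsmul }
  have hJb : ∀ (t : V₂) (z z' : V₁), ⟪Jl t z, z'⟫ = ⟪b z z', t⟫ := hJ
  have hHb : ∀ (t : V₂) (z : V₁), ‖Jl t z‖ = ‖t‖ * ‖z‖ := hH
  -- basic algebraic identities
  have hbzz : ∀ z : V₁, b z z = 0 := by
    intro z
    have h := hskew z z
    have h2 : b z z + b z z = 0 := add_eq_zero_iff_eq_neg.mpr h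
    have h3 : (2 : ℝ) • b z z = 0 := by rw [two_smul]; exact h2
    simpa using h3
  have hJtz : ∀ (t : V₂) (z : V₁), ⟪Jl t z, z⟫ = 0 := by
    intro t z; rw [hJb, hbzz]; simp
  have hJJ : ∀ (s t : V₂) (z : V₁), ⟪Jl s z, Jl t z⟫ = ⟪s, t⟫ * ‖z‖ ^ 2 := by
    intro s t z
    have he : Jl (s + t) z = Jl s z + Jl t z := by simp
    have h1 : ‖Jl s z + Jl t z‖ ^ 2 = ‖Jl s z‖ ^ 2 + 2 * ⟪Jl s z, Jl t z⟫ + ‖Jl t z‖ ^ 2 :=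
      norm_add_sq_real _ _
    rw [← he, hHb, hHb, hHb] at h1
    have h2 : ‖s + t‖ ^ 2 = ‖s‖ ^ 2 + 2 * ⟪s, t⟫ + ‖t‖ ^ 2 := norm_add_sq_real s t
    nlinarith [h1, h2]
  -- the point g
  have hg0 : g ≠ 0 := by rwa [Prod.mk_zero_zero] at hg
  have ha0 : aF g ≠ 0 := ne_of_gt (aF_pos hg0)
  -- the open set where aF ≠ 0
  have hSopen : IsOpen {h : V₁ × V₂ | aF h ≠ 0} :=
    (isOpen_ne (x := (0 : ℝ))).preimage continuous_aF
  have hgS : g ∈ {h : V₁ × V₂ | aF h ≠ 0} := ha0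
  have huU : Set.EqOn u (fun h => aF h ^ β) {h : V₁ × V₂ | aF h ≠ 0} := by
    intro h hh
    have hh' : aF h ≠ 0 := hh
    have hh0 : h ≠ (0, 0) := by
      intro hc; rw [hc, Prod.mk_zero_zero] at hh'; exact hh' aF_zero
    rw [hu h hh0]
    show Ng h ^ _ = _
    unfold Ng
    rw [← Real.rpow_mul (aF_nonneg h)]
    congr 1
    rw [hβ]; ring
  have hXdu_all : ∀ h ∈ {h : V₁ × V₂ | aF h ≠ 0}, ∀ v : V₁,
      Xd b v u h = 4 * β * aF h ^ (β - 1) * ⟪AJ Jl h, v⟫ := by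
    intro h hh v
    have heq : u =ᶠ[nhds h] (fun h' => aF h' ^ β) :=
      Filter.eventuallyEq_of_mem (hSopen.mem_nhds hh) huU
    have h0 : Xd b v u h = Xd b v (fun h' => aF h' ^ β) h := by
      show fderiv ℝ u h _ = fderiv ℝ _ h _
      rw [heq.fderiv_eq]
    rw [h0, XdU_eq b Jl hJb β hh v]
  have hXd1 : ∀ v : V₁, Xd b v u g = 4 * β * aF g ^ (β - 1) * ⟪AJ Jl g, v⟫ :=
    fun v => hXdu_all g hgS v
  have hXd2 : ∀ v w : V₁, Xd b w (Xd b v u) g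
      = 16 * β * (β - 1) * aF g ^ (β - 2) * ⟪AJ Jl g, w⟫ * ⟪AJ Jl g, v⟫
        + 4 * β * aF g ^ (β - 1) *
          (2 * ⟪g.1, w⟫ * ⟪g.1, v⟫ + ‖g.1‖ ^ 2 * ⟪w, v⟫ + 2 * ⟪b g.1 v, b g.1 w⟫
            + 4 * ⟪Jl g.2 w, v⟫) := by
    intro v w
    have hfe : (Xd b v u) =ᶠ[nhds g] (fun h => 4 * β * aF h ^ (β - 1) * ⟪AJ Jl h, v⟫) :=
      Filter.eventuallyEq_of_mem (hSopen.mem_nhds hgS) (fun h hh => hXdu_all h hh v)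
    have h0 : Xd b w (Xd b v u) g
        = Xd b w (fun h => 4 * β * aF h ^ (β - 1) * ⟪AJ Jl h, v⟫) g := by
      show fderiv ℝ (Xd b v u) g _ = fderiv ℝ _ g _
      rw [hfe.fderiv_eq]
    rw [h0, Xd2_eq b Jl hJb β ha0 v w]
  -- symmetrized second derivative
  have hX2s : ∀ w v : V₁, X2sym b w v u g
      = 16 * β * (β - 1) * aF g ^ (β - 2) * ⟪AJ Jl g, w⟫ * ⟪AJ Jl g, v⟫
        + 4 * β * aF g ^ (β - 1) *
          (2 * ⟪g.1, w⟫ * ⟪g.1, v⟫ + ‖g.1‖ ^ 2 * ⟪w, v⟫ + 2 * ⟪b g.1 v, b g.1 w⟫) := by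
    intro w v
    show (Xd b w (Xd b v u) g + Xd b v (Xd b w u) g) / 2 = _
    rw [hXd2 v w, hXd2 w v]
    have c1 : ⟪w, v⟫ = ⟪v, w⟫ := real_inner_comm v w
    have c2 : ⟪b g.1 v, b g.1 w⟫ = ⟪b g.1 w, b g.1 v⟫ := real_inner_comm _ _
    have c3 : ⟪Jl g.2 w, v⟫ + ⟪Jl g.2 v, w⟫ = (0 : ℝ) := by
      rw [hJb, hJb, ← inner_add_left, hskew w v, neg_add_cancel, inner_zero_left]
    have c4 : ⟪AJ Jl g, w⟫ * ⟪AJ Jl g, v⟫ = ⟪AJ Jl g, v⟫ * ⟪AJ Jl g, w⟫ := mul_comm _ _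
    linear_combination (-(4 * β * aF g ^ (β - 1) * ‖g.1‖ ^ 2) / 2) * c1
      - (4 * β * aF g ^ (β - 1)) * c2 + (2 * (4 * β * aF g ^ (β - 1))) * c3
      + (16 * β * (β - 1) * aF g ^ (β - 2) / 2) * c4
  -- orthonormal bases
  have hsum1 : ∑ i, (⟪stdOrthonormalBasis ℝ V₁ i, stdOrthonormalBasis ℝ V₁ i⟫ : ℝ)
      = (m : ℝ) := by
    have h1 : ∀ i, (⟪stdOrthonormalBasis ℝ V₁ i, stdOrthonormalBasis ℝ V₁ i⟫ : ℝ) = 1 := by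
      intro i
      rw [real_inner_self_eq_norm_sq, (stdOrthonormalBasis ℝ V₁).orthonormal.1 i]
      norm_num
    rw [Finset.sum_congr rfl fun i _ => h1 i]
    simp [hdV₁]
  have hsum5 : ∑ i, (⟪Jl g.2 (stdOrthonormalBasis ℝ V₁ i), stdOrthonormalBasis ℝ V₁ i⟫ : ℝ)
      = 0 := by
    rw [Finset.sum_congr rfl fun i _ => hJtz g.2 (stdOrthonormalBasis ℝ V₁ i)]
    simp
  have hnormb : ∀ z w : V₁, ⟪b z w, b z w⟫
      = ∑ j, ⟪Jl (stdOrthonormalBasis ℝ V₂ j) z, w⟫ * ⟪Jl (stdOrthonormalBasis ℝ V₂ j) z, w⟫ := by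
    intro z w
    rw [← sum_inner_mul (stdOrthonormalBasis ℝ V₂) (b z w) (b z w)]
    exact Finset.sum_congr rfl fun j _ => by rw [hJb]
  have hsum4 : ∑ i, (⟪b g.1 (stdOrthonormalBasis ℝ V₁ i), b g.1 (stdOrthonormalBasis ℝ V₁ i)⟫ : ℝ)
      = (k : ℝ) * ‖g.1‖ ^ 2 := by
    rw [Finset.sum_congr rfl fun i _ => hnormb g.1 (stdOrthonormalBasis ℝ V₁ i)]
    rw [Finset.sum_comm]
    have h1 : ∀ j, ∑ i, ⟪Jl (stdOrthonormalBasis ℝ V₂ j) g.1, stdOrthonormalBasis ℝ V₁ i⟫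
        * ⟪Jl (stdOrthonormalBasis ℝ V₂ j) g.1, stdOrthonormalBasis ℝ V₁ i⟫
        = ‖g.1‖ ^ 2 := by
      intro j
      rw [sum_inner_mul (stdOrthonormalBasis ℝ V₁), real_inner_self_eq_norm_sq, hHb,
        (stdOrthonormalBasis ℝ V₂).orthonormal.1 j]
      ring
    rw [Finset.sum_congr rfl fun j _ => h1 j]
    simp [hdV₂]
  -- inner products with A
  have hzw0 : ⟪g.1, Jl g.2 g.1⟫ = (0 : ℝ) := by
    rw [real_inner_comm]; exact hJtz g.2 g.1
  have hww : ⟪Jl g.2 g.1, Jl g.2 g.1⟫ = ‖g.2‖ ^ 2 * ‖g.1‖ ^ 2 := by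
    rw [hJJ, real_inner_self_eq_norm_sq]
  have haFe : aF g = (‖g.1‖ ^ 2) ^ 2 + 16 * ‖g.2‖ ^ 2 := by simp [aF, psiF, chiF]
  have hAA : ⟪AJ Jl g, AJ Jl g⟫ = ‖g.1‖ ^ 2 * aF g := by
    unfold AJ
    simp only [inner_add_left, inner_add_right, real_inner_smul_left, real_inner_smul_right]
    rw [real_inner_self_eq_norm_sq, hzw0, hJtz, hww, haFe]
    ring
  have hzA : ⟪g.1, AJ Jl g⟫ = (‖g.1‖ ^ 2) ^ 2 := by
    unfold AJ
    simp only [inner_add_right, real_inner_smul_right]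
    rw [real_inner_self_eq_norm_sq, hzw0]
    ring
  have hbAA : ⟪b g.1 (AJ Jl g), b g.1 (AJ Jl g)⟫ = 16 * (‖g.2‖ ^ 2 * (‖g.1‖ ^ 2) ^ 2) := by
    have h1 : b g.1 (AJ Jl g) = (4 : ℝ) • b g.1 (Jl g.2 g.1) := by
      unfold AJ
      rw [map_add, _root_.map_smul, _root_.map_smul, hbzz, smul_zero, zero_add]
    have h2 : ⟪b g.1 (Jl g.2 g.1), b g.1 (Jl g.2 g.1)⟫ = ‖g.2‖ ^ 2 * (‖g.1‖ ^ 2) ^ 2 := by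
      rw [hnormb g.1 (Jl g.2 g.1)]
      rw [Finset.sum_congr rfl fun j _ => by rw [hJJ (stdOrthonormalBasis ℝ V₂ j) g.2 g.1]]
      have h3 : ∀ j, (⟪stdOrthonormalBasis ℝ V₂ j, g.2⟫ * ‖g.1‖ ^ 2)
          * (⟪stdOrthonormalBasis ℝ V₂ j, g.2⟫ * ‖g.1‖ ^ 2)
          = (‖g.1‖ ^ 2 * ‖g.1‖ ^ 2) * (⟪g.2, stdOrthonormalBasis ℝ V₂ j⟫
            * ⟪g.2, stdOrthonormalBasis ℝ V₂ j⟫) := by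
        intro j
        rw [real_inner_comm g.2 (stdOrthonormalBasis ℝ V₂ j)]
        ring
      rw [Finset.sum_congr rfl fun j _ => h3 j, ← Finset.mul_sum,
        sum_inner_mul (stdOrthonormalBasis ℝ V₂) g.2 g.2, real_inner_self_eq_norm_sq]
      ring
    rw [h1, real_inner_smul_left, real_inner_smul_right, h2]
    ring
  -- the gradient
  have hGrad : Xgrad b u g = (4 * β * aF g ^ (β - 1)) • AJ Jl g := by
    apply ext_inner_right ℝ
    intro v
    rw [real_inner_smul_left]
    have h1 : ⟪Xgrad b u g, v⟫ = Xd b v u g := by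
      unfold Xgrad Xd
      rw [InnerProductSpace.toDual_symm_apply]
      simp
    rw [h1, hXd1 v]
  have hGnorm : ‖Xgrad b u g‖ ^ 2
      = (4 * β * aF g ^ (β - 1)) ^ 2 * (‖g.1‖ ^ 2 * aF g) := by
    rw [hGrad, norm_smul, mul_pow, Real.norm_eq_abs, sq_abs,
      ← real_inner_self_eq_norm_sq (AJ Jl g), hAA]
  -- the horizontal Laplacian
  have hLe : hLap b u g
      = 16 * β * (β - 1) * aF g ^ (β - 2) * (‖g.1‖ ^ 2 * aF g)
        + 4 * β * aF g ^ (β - 1) * ((2 + (m : ℝ) + 2 * (k : ℝ)) * ‖g.1‖ ^ 2) := by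
    unfold hLap
    have hterm : ∀ i, Xd b (stdOrthonormalBasis ℝ V₁ i)
        (Xd b (stdOrthonormalBasis ℝ V₁ i) u) g
        = (16 * β * (β - 1) * aF g ^ (β - 2))
            * (⟪AJ Jl g, stdOrthonormalBasis ℝ V₁ i⟫ * ⟪AJ Jl g, stdOrthonormalBasis ℝ V₁ i⟫)
          + (2 * (4 * β * aF g ^ (β - 1)))
            * (⟪g.1, stdOrthonormalBasis ℝ V₁ i⟫ * ⟪g.1, stdOrthonormalBasis ℝ V₁ i⟫)
          + (4 * β * aF g ^ (β - 1) * ‖g.1‖ ^ 2)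
            * ⟪stdOrthonormalBasis ℝ V₁ i, stdOrthonormalBasis ℝ V₁ i⟫
          + (2 * (4 * β * aF g ^ (β - 1)))
            * ⟪b g.1 (stdOrthonormalBasis ℝ V₁ i), b g.1 (stdOrthonormalBasis ℝ V₁ i)⟫
          + (4 * (4 * β * aF g ^ (β - 1)))
            * ⟪Jl g.2 (stdOrthonormalBasis ℝ V₁ i), stdOrthonormalBasis ℝ V₁ i⟫ := by
      intro i
      rw [hXd2 (stdOrthonormalBasis ℝ V₁ i) (stdOrthonormalBasis ℝ V₁ i)]
      ring
    rw [Finset.sum_congr rfl fun i _ => hterm i]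
    rw [Finset.sum_add_distrib, Finset.sum_add_distrib, Finset.sum_add_distrib,
      Finset.sum_add_distrib, ← Finset.mul_sum, ← Finset.mul_sum, ← Finset.mul_sum,
      ← Finset.mul_sum, ← Finset.mul_sum]
    rw [sum_inner_mul (stdOrthonormalBasis ℝ V₁) (AJ Jl g) (AJ Jl g),
      sum_inner_mul (stdOrthonormalBasis ℝ V₁) g.1 g.1, hsum1, hsum4, hsum5,
      hAA, real_inner_self_eq_norm_sq]
    ring
  -- the horizontal ∞-Laplacian
  have hInfe : hInfLap b u g
      = (16 * β * (β - 1) * aF g ^ (β - 2)) * (4 * β * aF g ^ (β - 1)) ^ 2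
          * (‖g.1‖ ^ 2 * aF g) ^ 2
        + 2 * (4 * β * aF g ^ (β - 1)) ^ 3 * ((‖g.1‖ ^ 2) ^ 2) ^ 2
        + (4 * β * aF g ^ (β - 1)) ^ 3 * ‖g.1‖ ^ 2 * (‖g.1‖ ^ 2 * aF g)
        + 2 * (4 * β * aF g ^ (β - 1)) ^ 3 * (16 * (‖g.2‖ ^ 2 * (‖g.1‖ ^ 2) ^ 2)) := by
    unfold hInfLap
    have hin : ∀ i, ∑ j, X2sym b (stdOrthonormalBasis ℝ V₁ i) (stdOrthonormalBasis ℝ V₁ j) u g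
          * Xd b (stdOrthonormalBasis ℝ V₁ i) u g * Xd b (stdOrthonormalBasis ℝ V₁ j) u g
        = (16 * β * (β - 1) * aF g ^ (β - 2)) * (4 * β * aF g ^ (β - 1)) ^ 2
            * (⟪AJ Jl g, stdOrthonormalBasis ℝ V₁ i⟫ * ⟪AJ Jl g, stdOrthonormalBasis ℝ V₁ i⟫)
            * ⟪AJ Jl g, AJ Jl g⟫
          + 2 * (4 * β * aF g ^ (β - 1)) ^ 3
            * (⟪g.1, stdOrthonormalBasis ℝ V₁ i⟫ * ⟪AJ Jl g, stdOrthonormalBasis ℝ V₁ i⟫)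
            * ⟪g.1, AJ Jl g⟫
          + (4 * β * aF g ^ (β - 1)) ^ 3 * ‖g.1‖ ^ 2
            * ⟪AJ Jl g, stdOrthonormalBasis ℝ V₁ i⟫
            * ⟪stdOrthonormalBasis ℝ V₁ i, AJ Jl g⟫
          + 2 * (4 * β * aF g ^ (β - 1)) ^ 3 * ⟪AJ Jl g, stdOrthonormalBasis ℝ V₁ i⟫
            * ⟪Jl (b g.1 (stdOrthonormalBasis ℝ V₁ i)) g.1, AJ Jl g⟫ := by
      intro i
      have pij : ∀ j, X2sym b (stdOrthonormalBasis ℝ V₁ i) (stdOrthonormalBasis ℝ V₁ j) u g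
            * Xd b (stdOrthonormalBasis ℝ V₁ i) u g * Xd b (stdOrthonormalBasis ℝ V₁ j) u g
          = ((16 * β * (β - 1) * aF g ^ (β - 2)) * (4 * β * aF g ^ (β - 1)) ^ 2
              * (⟪AJ Jl g, stdOrthonormalBasis ℝ V₁ i⟫ * ⟪AJ Jl g, stdOrthonormalBasis ℝ V₁ i⟫))
              * (⟪AJ Jl g, stdOrthonormalBasis ℝ V₁ j⟫ * ⟪AJ Jl g, stdOrthonormalBasis ℝ V₁ j⟫)
            + (2 * (4 * β * aF g ^ (β - 1)) ^ 3
              * (⟪g.1, stdOrthonormalBasis ℝ V₁ i⟫ * ⟪AJ Jl g, stdOrthonormalBasis ℝ V₁ i⟫))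
              * (⟪g.1, stdOrthonormalBasis ℝ V₁ j⟫ * ⟪AJ Jl g, stdOrthonormalBasis ℝ V₁ j⟫)
            + ((4 * β * aF g ^ (β - 1)) ^ 3 * ‖g.1‖ ^ 2
              * ⟪AJ Jl g, stdOrthonormalBasis ℝ V₁ i⟫)
              * (⟪stdOrthonormalBasis ℝ V₁ i, stdOrthonormalBasis ℝ V₁ j⟫
                * ⟪AJ Jl g, stdOrthonormalBasis ℝ V₁ j⟫)
            + (2 * (4 * β * aF g ^ (β - 1)) ^ 3 * ⟪AJ Jl g, stdOrthonormalBasis ℝ V₁ i⟫)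
              * (⟪Jl (b g.1 (stdOrthonormalBasis ℝ V₁ i)) g.1, stdOrthonormalBasis ℝ V₁ j⟫
                * ⟪AJ Jl g, stdOrthonormalBasis ℝ V₁ j⟫) := by
        intro j
        rw [hX2s (stdOrthonormalBasis ℝ V₁ i) (stdOrthonormalBasis ℝ V₁ j),
          hXd1 (stdOrthonormalBasis ℝ V₁ i), hXd1 (stdOrthonormalBasis ℝ V₁ j)]
        have hb' : ⟪b g.1 (stdOrthonormalBasis ℝ V₁ j), b g.1 (stdOrthonormalBasis ℝ V₁ i)⟫
            = ⟪Jl (b g.1 (stdOrthonormalBasis ℝ V₁ i)) g.1, stdOrthonormalBasis ℝ V₁ j⟫ :=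
          (hJb _ _ _).symm
        rw [hb']
        ring
      rw [Finset.sum_congr rfl fun j _ => pij j]
      rw [Finset.sum_add_distrib, Finset.sum_add_distrib, Finset.sum_add_distrib,
        ← Finset.mul_sum, ← Finset.mul_sum, ← Finset.mul_sum, ← Finset.mul_sum]
      rw [sum_inner_mul (stdOrthonormalBasis ℝ V₁) (AJ Jl g) (AJ Jl g),
        sum_inner_mul (stdOrthonormalBasis ℝ V₁) g.1 (AJ Jl g),
        sum_inner_mul (stdOrthonormalBasis ℝ V₁) (stdOrthonormalBasis ℝ V₁ i) (AJ Jl g),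
        sum_inner_mul (stdOrthonormalBasis ℝ V₁) (Jl (b g.1 (stdOrthonormalBasis ℝ V₁ i)) g.1)
          (AJ Jl g)]
    have hout : ∀ i,
        (16 * β * (β - 1) * aF g ^ (β - 2)) * (4 * β * aF g ^ (β - 1)) ^ 2
            * (⟪AJ Jl g, stdOrthonormalBasis ℝ V₁ i⟫ * ⟪AJ Jl g, stdOrthonormalBasis ℝ V₁ i⟫)
            * ⟪AJ Jl g, AJ Jl g⟫
          + 2 * (4 * β * aF g ^ (β - 1)) ^ 3
            * (⟪g.1, stdOrthonormalBasis ℝ V₁ i⟫ * ⟪AJ Jl g, stdOrthonormalBasis ℝ V₁ i⟫)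
            * ⟪g.1, AJ Jl g⟫
          + (4 * β * aF g ^ (β - 1)) ^ 3 * ‖g.1‖ ^ 2
            * ⟪AJ Jl g, stdOrthonormalBasis ℝ V₁ i⟫
            * ⟪stdOrthonormalBasis ℝ V₁ i, AJ Jl g⟫
          + 2 * (4 * β * aF g ^ (β - 1)) ^ 3 * ⟪AJ Jl g, stdOrthonormalBasis ℝ V₁ i⟫
            * ⟪Jl (b g.1 (stdOrthonormalBasis ℝ V₁ i)) g.1, AJ Jl g⟫
        = ((16 * β * (β - 1) * aF g ^ (β - 2)) * (4 * β * aF g ^ (β - 1)) ^ 2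
            * ⟪AJ Jl g, AJ Jl g⟫)
            * (⟪AJ Jl g, stdOrthonormalBasis ℝ V₁ i⟫ * ⟪AJ Jl g, stdOrthonormalBasis ℝ V₁ i⟫)
          + (2 * (4 * β * aF g ^ (β - 1)) ^ 3 * ⟪g.1, AJ Jl g⟫)
            * (⟪g.1, stdOrthonormalBasis ℝ V₁ i⟫ * ⟪AJ Jl g, stdOrthonormalBasis ℝ V₁ i⟫)
          + ((4 * β * aF g ^ (β - 1)) ^ 3 * ‖g.1‖ ^ 2)
            * (⟪AJ Jl g, stdOrthonormalBasis ℝ V₁ i⟫ * ⟪AJ Jl g, stdOrthonormalBasis ℝ V₁ i⟫)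
          + (2 * (4 * β * aF g ^ (β - 1)) ^ 3)
            * (⟪Jl (b g.1 (AJ Jl g)) g.1, stdOrthonormalBasis ℝ V₁ i⟫
              * ⟪AJ Jl g, stdOrthonormalBasis ℝ V₁ i⟫) := by
      intro i
      have c4 : ⟪stdOrthonormalBasis ℝ V₁ i, AJ Jl g⟫
          = ⟪AJ Jl g, stdOrthonormalBasis ℝ V₁ i⟫ := real_inner_comm _ _
      have c5 : ⟪Jl (b g.1 (stdOrthonormalBasis ℝ V₁ i)) g.1, AJ Jl g⟫
          = ⟪Jl (b g.1 (AJ Jl g)) g.1, stdOrthonormalBasis ℝ V₁ i⟫ := by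
        rw [hJb, hJb]
        exact real_inner_comm _ _
      rw [c4, c5]
      ring
    rw [Finset.sum_congr rfl fun i _ => (hin i).trans (hout i)]
    rw [Finset.sum_add_distrib, Finset.sum_add_distrib, Finset.sum_add_distrib,
      ← Finset.mul_sum, ← Finset.mul_sum, ← Finset.mul_sum, ← Finset.mul_sum]
    rw [sum_inner_mul (stdOrthonormalBasis ℝ V₁) (AJ Jl g) (AJ Jl g),
      sum_inner_mul (stdOrthonormalBasis ℝ V₁) g.1 (AJ Jl g),
      sum_inner_mul (stdOrthonormalBasis ℝ V₁) (Jl (b g.1 (AJ Jl g)) g.1) (AJ Jl g)]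
    rw [hJb, hAA, hzA, hbAA]
    ring
  -- final algebra
  rw [hGnorm, hLe, hInfe]
  have hpow : aF g ^ (β - 1) = aF g ^ (β - 2) * aF g := by
    rw [← Real.rpow_add_one ha0 (β - 2)]
    congr 1
    ring
  rw [hpow]
  have hkey : 4 * β * (p - 1) = p - ((m : ℝ) + 2 * k) := by
    rw [hβ]; field_simp
  linear_combination (64 * β ^ 3 * (aF g ^ (β - 2)) ^ 3 * (aF g) ^ 4 * (‖g.1‖ ^ 2) ^ 2) * hkey
    - (128 * (p - 2) * β ^ 3 * (aF g ^ (β - 2)) ^ 3 * (aF g) ^ 3 * (‖g.1‖ ^ 2) ^ 2) * haFe
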